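/- Closure relation (flip invariance of the action) for Q1 with δ=0: Let x, x₁, x₂, x₃, x₁₂, x₁₃, x₂₃, x₁₂₃ be real numbers and α₁, α₂, α₃ pairwise distinct nonzero real parameters such that Q(x,x₁,x₁₂,x₂;α₁,α₂) = 0, Q(x,x₂,x₂₃,x₃;α₂,α₃) = 0, Q(x,x₁,x₁₃,x₃;α₁,α₃) = 0, Q(x₁,x₁₂,x₁₂₃,x₁₃;α₂,α₃) = 0, Q(x₂,x₁₂,x₁₂₃,x₂₃;α₁,α₃) = 0, Q(x₃,x₁₃,x₁₂₃,x₂₃;α₁,α₂) = 0, where Q(x,u,y,v;α,β) = α(xu+yv) − β(xv+yu) − (α−β)(xy+uv). Assume all the differences x₁−x₁₂, x₂−x₂₃, x₃−x₁₃, x₁−x₁₃, x₂−x₁₂, x₃−x₂₃, x₁₂−x₁₃, x₂₃−x₁₂, x₁₃−x₂₃, x₁−x₂, x₂−x₃, x₃−x₁ are nonzero. Then α₂·log|x₁−x₁₂| + α₃·log|x₂−x₂₃| + α₁·log|x₃−x₁₃| − α₃·log|x₁−x₁₃| − α₁·log|x₂−x₁₂| − α₂·log|x₃−x₂₃| − (α₂−α₃)·log|x₁₂−x₁₃|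 − (α₃−α₁)·log|x₂₃−x₁₂| − (α₁−α₂)·log|x₁₃−x₂₃| + (α₂−α₃)·log|x₂−x₃| + (α₃−α₁)·log|x₃−x₁| + (α₁−α₂)·log|x₁−x₂| = 0. -/

import Mathlib

/-- Closure relation (flip invariance of the action) for (Q1)_{δ=0}. -/
theorem stmt_14 (x x1 x2 x3 x12 x13 x23 x123 α1 α2 α3 : ℝ)
    (hα1 : α1 ≠ 0) (hα2 : α2 ≠ 0) (hα3 : α3 ≠ 0)
    (h12 : α1 ≠ α2) (h13 : α1 ≠ α3) (h23 : α2 ≠ α3)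
    (hQ1 : α1 * (x*x1 + x12*x2) - α2 * (x*x2 + x12*x1) - (α1 - α2) * (x*x12 + x1*x2) = 0)
    (hQ2 : α2 * (x*x2 + x23*x3) - α3 * (x*x3 + x23*x2) - (α2 - α3) * (x*x23 + x2*x3) = 0)
    (hQ3 : α1 * (x*x1 + x13*x3) - α3 * (x*x3 + x13*x1) - (α1 - α3) * (x*x13 + x1*x3) = 0)
    (hQ4 : α2 * (x1*x12 + x123*x13) - α3 * (x1*x13 + x123*x12)
        - (α2 - α3) * (x1*x123 + x12*x13) = 0)
    (hQ5 : α1 * (x2*x12 + x123*x23) - α3 * (x2*x23 + x123*x12)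
        - (α1 - α3) * (x2*x123 + x12*x23) = 0)
    (hQ6 : α1 * (x3*x13 + x123*x23) - α2 * (x3*x23 + x123*x13)
        - (α1 - α2) * (x3*x123 + x13*x23) = 0)
    (d1 : x1 - x12 ≠ 0) (d2 : x2 - x23 ≠ 0) (d3 : x3 - x13 ≠ 0)
    (d4 : x1 - x13 ≠ 0) (d5 : x2 - x12 ≠ 0) (d6 : x3 - x23 ≠ 0)
    (d7 : x12 - x13 ≠ 0) (d8 : x23 - x12 ≠ 0) (d9 : x13 - x23 ≠ 0)
    (d10 : x1 - x2 ≠ 0) (d11 : x2 - x3 ≠ 0) (d12 : x3 - x1 ≠ 0) :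
    α2 * Real.log |x1 - x12| + α3 * Real.log |x2 - x23| + α1 * Real.log |x3 - x13|
      - α3 * Real.log |x1 - x13| - α1 * Real.log |x2 - x12| - α2 * Real.log |x3 - x23|
      - (α2 - α3) * Real.log |x12 - x13| - (α3 - α1) * Real.log |x23 - x12|
      - (α1 - α2) * Real.log |x13 - x23|
      + (α2 - α3) * Real.log |x2 - x3| + (α3 - α1) * Real.log |x3 - x1|
      + (α1 - α2) * Real.log |x1 - x2| = 0 := by
  -- Denominators of the explicit solutions of the three bottom faces are nonzero.
  have hD1 : α1*(x-x2) - α2*(x-x1) ≠ 0 := by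
    intro h
    have h2 : α1*((x-x2)*(x1-x2)) = 0 := by linear_combination hQ1 - (x2-x12)*h
    have h3 : x - x2 = 0 := by
      rcases mul_eq_zero.mp h2 with h' | h'
      · exact absurd h' hα1
      · rcases mul_eq_zero.mp h' with h'' | h''
        · exact h''
        · exact absurd h'' d10
    have h5 : α2*(x-x1) = 0 := by linear_combination α1*h3 - h
    have h4 : x - x1 = 0 := by
      rcases mul_eq_zero.mp h5 with h' | h'
      · exact absurd h' hα2
      · exact h'
    exact d10 (by linear_combination h3 - h4)
  have hD2 : α1*(x-x3) - α3*(x-x1) ≠ 0 := by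
    intro h
    have h2 : α1*((x-x3)*(x1-x3)) = 0 := by linear_combination hQ3 - (x3-x13)*h
    have h3 : x - x3 = 0 := by
      rcases mul_eq_zero.mp h2 with h' | h'
      · exact absurd h' hα1
      · rcases mul_eq_zero.mp h' with h'' | h''
        · exact h''
        · exact absurd (show x3 - x1 = 0 by linear_combination -h'') d12
    have h5 : α3*(x-x1) = 0 := by linear_combination α1*h3 - h
    have h4 : x - x1 = 0 := by
      rcases mul_eq_zero.mp h5 with h' | h'
      · exact absurd h' hα3
      · exact h'
    exact d12 (by linear_combination h4 - h3)
  have hD3 : α2*(x-x3) - α3*(x-x2) ≠ 0 := by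
    intro h
    have h2 : α2*((x-x3)*(x2-x3)) = 0 := by linear_combination hQ2 - (x3-x23)*h
    have h3 : x - x3 = 0 := by
      rcases mul_eq_zero.mp h2 with h' | h'
      · exact absurd h' hα2
      · rcases mul_eq_zero.mp h' with h'' | h''
        · exact h''
        · exact absurd h'' d11
    have h5 : α3*(x-x2) = 0 := by linear_combination α2*h3 - h
    have h4 : x - x2 = 0 := by
      rcases mul_eq_zero.mp h5 with h' | h'
      · exact absurd h' hα3
      · exact h'
    exact d11 (by linear_combination h3 - h4)
  -- Explicit solutions of the three bottom faces.
  have e12 : x12 = (α1*(x-x2)*x1 - α2*(x-x1)*x2) / (α1*(x-x2) - α2*(x-x1)) := by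
    rw [eq_div_iff hD1]; linear_combination -hQ1
  have e13 : x13 = (α1*(x-x3)*x1 - α3*(x-x1)*x3) / (α1*(x-x3) - α3*(x-x1)) := by
    rw [eq_div_iff hD2]; linear_combination -hQ3
  have e23 : x23 = (α2*(x-x3)*x2 - α3*(x-x2)*x3) / (α2*(x-x3) - α3*(x-x2)) := by
    rw [eq_div_iff hD3]; linear_combination -hQ2
  -- The three closure (tetrahedron-type) product identities.
  have G1 : (x3-x13)*(x23-x12)*(x1-x2) = (x2-x12)*(x13-x23)*(x3-x1) := by
    rw [e12, e13, e23]
    generalize hA : α1*(x-x2) - α2*(x-x1) = A at *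
    generalize hB : α1*(x-x3) - α3*(x-x1) = B at *
    generalize hC : α2*(x-x3) - α3*(x-x2) = C at *
    field_simp
    subst hA hB hC
    ring
  have G2 : (x1-x12)*(x13-x23)*(x2-x3) = (x3-x23)*(x12-x13)*(x1-x2) := by
    rw [e12, e13, e23]
    generalize hA : α1*(x-x2) - α2*(x-x1) = A at *
    generalize hB : α1*(x-x3) - α3*(x-x1) = B at *
    generalize hC : α2*(x-x3) - α3*(x-x2) = C at *
    field_simp
    subst hA hB hC
    ring
  have G3 : (x2-x23)*(x12-x13)*(x3-x1) = (x1-x13)*(x23-x12)*(x2-x3) := by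
    rw [e12, e13, e23]
    generalize hA : α1*(x-x2) - α2*(x-x1) = A at *
    generalize hB : α1*(x-x3) - α3*(x-x1) = B at *
    generalize hC : α2*(x-x3) - α3*(x-x2) = C at *
    field_simp
    subst hA hB hC
    ring
  -- Convert to log identities.
  have l1 := congrArg Real.log G1
  rw [Real.log_mul (mul_ne_zero d3 d8) d10, Real.log_mul d3 d8,
      Real.log_mul (mul_ne_zero d5 d9) d12, Real.log_mul d5 d9] at l1
  have l2 := congrArg Real.log G2
  rw [Real.log_mul (mul_ne_zero d1 d9) d11, Real.log_mul d1 d9,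
      Real.log_mul (mul_ne_zero d6 d7) d10, Real.log_mul d6 d7] at l2
  have l3 := congrArg Real.log G3
  rw [Real.log_mul (mul_ne_zero d2 d7) d12, Real.log_mul d2 d7,
      Real.log_mul (mul_ne_zero d4 d8) d11, Real.log_mul d4 d8] at l3
  simp only [Real.log_abs]
  linear_combination α1*l1 + α2*l2 + α3*l3
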